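/- Let K ⊆ J be proper ideals of a finitely generated torsion-free monoid P and E a ℤ[P]/(K)-module. If Tor₁^{ℤ[P]/(K)}(ℤ[P]/(P⁺), E) = 0, then Tor₁^{ℤ[P]/(J)}(ℤ[P]/(P⁺), E/(J)E) = 0. -/

import Mathlib

open CategoryTheory

universe u
open scoped TensorProduct

section TorAux

variable {A : Type u} [CommRing A]

theorem smul_top_le_comap (a : Ideal A) {Y Z : Type*} [AddCommGroup Y] [Module A Y]
    [AddCommGroup Z] [Module A Z] (f : Y →ₗ[A] Z) :
    a • (⊤ : Submodule A Y) ≤ (a • (⊤ : Submodule A Z)).comap f := by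
  rw [← Submodule.map_le_iff_le_comap, Submodule.map_smul'']
  exact Submodule.smul_mono le_rfl le_top

theorem exact_mapQ_iff (a : Ideal A) {F₂ F₁ F₀ M : Type u} [AddCommGroup F₂] [Module A F₂]
    [AddCommGroup F₁] [Module A F₁] [AddCommGroup F₀] [Module A F₀]
    [AddCommGroup M] [Module A M]
    (d₂ : F₂ →ₗ[A] F₁) (d₁ : F₁ →ₗ[A] F₀) (p : F₀ →ₗ[A] M)
    (hex : Function.Exact d₂ d₁) (hker : LinearMap.ker p = LinearMap.range d₁) :
    Function.Exact (Submodule.mapQ _ _ d₂ (smul_top_le_comap a d₂))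
      (Submodule.mapQ _ _ d₁ (smul_top_le_comap a d₁)) ↔
      LinearMap.ker p ⊓ a • ⊤ ≤ a • LinearMap.ker p := by
  have hsmul : a • LinearMap.ker p = Submodule.map d₁ (a • ⊤) := by
    rw [Submodule.map_smul'', Submodule.map_top, hker]
  constructor
  · intro hE z hz
    obtain ⟨hz1, hz2⟩ := Submodule.mem_inf.mp hz
    rw [hker] at hz1
    obtain ⟨y, rfl⟩ := hz1
    have h0 : Submodule.mapQ _ _ d₁ (smul_top_le_comap a d₁) (Submodule.Quotient.mk y) = 0 := by
      rw [Submodule.mapQ_apply, Submodule.Quotient.mk_eq_zero]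
      exact hz2
    obtain ⟨w', hw'⟩ := (hE _).mp h0
    obtain ⟨w, rfl⟩ := Submodule.Quotient.mk_surjective _ w'
    rw [Submodule.mapQ_apply, Submodule.Quotient.eq] at hw'
    have hd : d₁ y = d₁ (y - d₂ w) := by
      rw [map_sub, hex.apply_apply_eq_zero w, sub_zero]
    rw [hsmul, hd]
    exact Submodule.mem_map_of_mem (by simpa using neg_mem hw')
  · intro hC y'
    constructor
    · intro h0
      obtain ⟨y, rfl⟩ := Submodule.Quotient.mk_surjective _ y'
      rw [Submodule.mapQ_apply, Submodule.Quotient.mk_eq_zero] at h0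
      have h1 : d₁ y ∈ LinearMap.ker p ⊓ a • ⊤ :=
        Submodule.mem_inf.mpr ⟨hker ▸ LinearMap.mem_range_self d₁ y, h0⟩
      have h2 := hC h1
      rw [hsmul] at h2
      obtain ⟨t, ht, hdt⟩ := h2
      have h3 : y - t ∈ LinearMap.ker d₁ := by
        simp [LinearMap.mem_ker, map_sub, hdt]
      rw [LinearMap.exact_iff.mp hex] at h3
      obtain ⟨w, hw⟩ := h3
      refine ⟨Submodule.Quotient.mk w, ?_⟩
      rw [Submodule.mapQ_apply, hw]
      rw [Submodule.Quotient.eq]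
      simpa using neg_mem ht
    · rintro ⟨x', rfl⟩
      obtain ⟨x, rfl⟩ := Submodule.Quotient.mk_surjective _ x'
      rw [Submodule.mapQ_apply, Submodule.mapQ_apply, hex.apply_apply_eq_zero,
        Submodule.Quotient.mk_eq_zero]
      exact zero_mem _

theorem quotTensor_natural (a : Ideal A) {Y Z : Type u} [AddCommGroup Y] [Module A Y]
    [AddCommGroup Z] [Module A Z] (f : Y →ₗ[A] Z) (x : (A ⧸ a) ⊗[A] Y) :
    (TensorProduct.quotTensorEquivQuotSMul Z a) (LinearMap.lTensor (A ⧸ a) f x) =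
      Submodule.mapQ _ _ f (smul_top_le_comap a f)
        ((TensorProduct.quotTensorEquivQuotSMul Y a) x) := by
  induction x using TensorProduct.induction_on with
  | zero => simp
  | tmul r y =>
    obtain ⟨r, rfl⟩ := Ideal.Quotient.mk_surjective r
    simp only [LinearMap.lTensor_tmul, TensorProduct.quotTensorEquivQuotSMul_mk_tmul,
      Submodule.mapQ_apply, map_smul]
  | add x₁ x₂ h₁ h₂ => simp only [map_add, h₁, h₂]

theorem cond_transfer (a : Ideal A) {F G M : Type*} [AddCommGroup F] [Module A F]
    [AddCommGroup G] [Module A G] [AddCommGroup M] [Module A M]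
    (p : F →ₗ[A] M) (q : G →ₗ[A] M) (h : F →ₗ[A] G) (hh : q ∘ₗ h = p)
    (k : G →ₗ[A] F) (hk : p ∘ₗ k = q)
    (hp : LinearMap.ker p ⊓ a • ⊤ ≤ a • LinearMap.ker p) :
    LinearMap.ker q ⊓ a • ⊤ ≤ a • LinearMap.ker q := by
  intro y hy
  obtain ⟨hyq, hya⟩ := Submodule.mem_inf.mp hy
  have hky : k y ∈ LinearMap.ker p ⊓ a • ⊤ := by
    refine Submodule.mem_inf.mpr ⟨?_, ?_⟩
    · have : p (k y) = q y := LinearMap.congr_fun hk y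
      simp [LinearMap.mem_ker, this, LinearMap.mem_ker.mp hyq]
    · have : k y ∈ Submodule.map k (a • ⊤) := Submodule.mem_map_of_mem hya
      rw [Submodule.map_smul''] at this
      exact Submodule.smul_mono le_rfl le_top this
  have h1 : h (k y) ∈ a • LinearMap.ker q := by
    have : h (k y) ∈ Submodule.map h (a • LinearMap.ker p) :=
      Submodule.mem_map_of_mem (hp hky)
    rw [Submodule.map_smul''] at this
    refine Submodule.smul_mono le_rfl ?_ this
    rintro z ⟨w, hw, rfl⟩
    have : q (h w) = p w := LinearMap.congr_fun hh w
    simp [LinearMap.mem_ker, this, LinearMap.mem_ker.mp hw]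
  have h2 : y - h (k y) ∈ a • LinearMap.ker q := by
    set e : G →ₗ[A] G := LinearMap.id - h ∘ₗ k with he
    have hey : e y = y - h (k y) := by simp [he]
    have : e y ∈ Submodule.map e (a • ⊤) := Submodule.mem_map_of_mem hya
    rw [Submodule.map_smul''] at this
    rw [← hey]
    refine Submodule.smul_mono le_rfl ?_ this
    rintro z ⟨w, -, rfl⟩
    have hqh : q (h (k w)) = p (k w) := LinearMap.congr_fun hh (k w)
    have hpk : p (k w) = q w := LinearMap.congr_fun hk w
    simp [he, LinearMap.mem_ker, map_sub, hqh, hpk]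
  simpa using add_mem h2 h1

end TorAux

section TorCat

open CategoryTheory Limits

lemma moduleCat_isZero_iff {R : Type*} [Ring R] {M : ModuleCat R} :
    IsZero M ↔ Subsingleton M := by
  constructor
  · intro h
    have h0 : (𝟙 M : M ⟶ M) = 0 := h.eq_of_src _ _
    refine ⟨fun x y => ?_⟩
    calc x = (𝟙 M : M ⟶ M) x := rfl
    _ = (0 : M ⟶ M) x := by rw [h0]
    _ = (0 : M ⟶ M) y := rfl
    _ = (𝟙 M : M ⟶ M) y := by rw [h0]
    _ = y := rfl
  · intro h
    exact ModuleCat.isZero_of_subsingleton M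

variable {A : Type u} [CommRing A]

/-- The canonical free presentation of a module. -/
noncomputable def canonPres (A : Type u) [CommRing A] (M : Type u) [AddCommGroup M]
    [Module A M] : (M →₀ A) →ₗ[A] M :=
  Finsupp.linearCombination A id

theorem canonPres_surjective (A : Type u) [CommRing A] (M : Type u) [AddCommGroup M]
    [Module A M] : Function.Surjective (canonPres A M) :=
  Finsupp.linearCombination_id_surjective A M

theorem tor_one_subsingleton_iff (a : Ideal A) (M : Type u) [AddCommGroup M] [Module A M] :
    Subsingleton (((Tor (ModuleCat.{u} A) 1).obj (ModuleCat.of A (A ⧸ a))).obj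
        (ModuleCat.of A M)) ↔
      LinearMap.ker (canonPres A M) ⊓ a • ⊤ ≤ a • LinearMap.ker (canonPres A M) := by
  classical
  obtain ⟨P⟩ := (inferInstance : HasProjectiveResolution (ModuleCat.of A M)).out
  set X : ModuleCat.{u} A := ModuleCat.of A (A ⧸ a) with hX
  set G := (MonoidalCategory.tensoringLeft (ModuleCat.{u} A)).obj X with hG
  set Q := (G.mapHomologicalComplex _).obj P.complex with hQ
  -- the differentials, module-theoretically
  let d₂ : P.complex.X 2 →ₗ[A] P.complex.X 1 := (P.complex.d 2 1).hom
  let d₁ : P.complex.X 1 →ₗ[A] P.complex.X 0 := (P.complex.d 1 0).hom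
  let p₀ : P.complex.X 0 →ₗ[A] M := (P.π.f 0).hom
  have hp₀surj : Function.Surjective p₀ := by
    have : Epi (P.π.f 0) := inferInstance
    exact (ModuleCat.epi_iff_surjective (P.π.f 0)).mp this
  have hex : Function.Exact d₂ d₁ :=
    (ShortComplex.ShortExact.moduleCat_exact_iff_function_exact _).mp (P.exact_succ 0)
  have hker : LinearMap.ker p₀ = LinearMap.range d₁ :=
    ((ShortComplex.mk _ _ P.complex_d_comp_π_f_zero).moduleCat_exact_iff_range_eq_ker.mp
      P.exact₀).symm
  -- Step 1: identify Tor with homology of the tensored complex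
  have step1 : Subsingleton (((Tor (ModuleCat.{u} A) 1).obj X).obj (ModuleCat.of A M)) ↔
      Subsingleton (Q.homology 1) :=
    Equiv.subsingleton_congr (P.isoLeftDerivedObj G 1).toLinearEquiv.toEquiv
  rw [step1]
  -- Step 2: subsingleton homology iff exactness at 1
  rw [← moduleCat_isZero_iff, ← HomologicalComplex.exactAt_iff_isZero_homology,
    HomologicalComplex.exactAt_iff' Q (i := 2) (j := 1) (k := 0) (by simp) (by simp)]
  -- Step 3: exactness in terms of functions
  rw [ShortComplex.ShortExact.moduleCat_exact_iff_function_exact]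
  -- Step 4: the maps are lTensor
  have step4 : Function.Exact ((Q.sc' 2 1 0).f) ((Q.sc' 2 1 0).g) ↔
      Function.Exact (LinearMap.lTensor (A ⧸ a) d₂) (LinearMap.lTensor (A ⧸ a) d₁) :=
    Iff.rfl
  rw [step4]
  -- Step 5: ladder to mapQ
  have step5 : Function.Exact (LinearMap.lTensor (A ⧸ a) d₂) (LinearMap.lTensor (A ⧸ a) d₁) ↔
      Function.Exact (Submodule.mapQ _ _ d₂ (smul_top_le_comap a d₂))
        (Submodule.mapQ _ _ d₁ (smul_top_le_comap a d₁)) := by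
    refine (Function.Exact.iff_of_ladder_linearEquiv
      (e₁ := TensorProduct.quotTensorEquivQuotSMul (P.complex.X 2) a)
      (e₂ := TensorProduct.quotTensorEquivQuotSMul (P.complex.X 1) a)
      (e₃ := TensorProduct.quotTensorEquivQuotSMul (P.complex.X 0) a)
      ?_ ?_).symm
    · exact LinearMap.ext fun x => (quotTensor_natural a d₂ x).symm
    · exact LinearMap.ext fun x => (quotTensor_natural a d₁ x).symm
  rw [step5, exact_mapQ_iff a d₂ d₁ p₀ hex hker]
  -- Step 6: transfer between presentations
  have hprojF : Module.Projective A (P.complex.X 0) := by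
    have hP0 : Projective (P.complex.X 0) := P.projective 0
    have : Projective (ModuleCat.of A (P.complex.X 0)) :=
      hP0
    exact (IsProjective.iff_projective _).mpr this
  obtain ⟨h, hh⟩ := Module.projective_lifting_property p₀ (canonPres A M) hp₀surj
  obtain ⟨k, hk⟩ := Module.projective_lifting_property (canonPres A M) p₀
    (canonPres_surjective A M)
  constructor
  · intro hc
    exact cond_transfer a p₀ (canonPres A M) k hk h hh hc
  · intro hc
    exact cond_transfer a (canonPres A M) p₀ h hh k hk hc

end TorCat

section Chase

variable {R : Type u} [CommRing R]

/-- The canonical free presentation of `E/J₁E` over `R/J₁`, indexed by `E`. -/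
noncomputable def qPres (R : Type u) [CommRing R] (J₁ : Ideal R) (E : Type u) [AddCommGroup E]
    [Module R E] :
    (E →₀ R ⧸ J₁) →ₗ[R ⧸ J₁] (E ⧸ (J₁ • ⊤ : Submodule R E)) :=
  Finsupp.linearCombination (R ⧸ J₁)
    (fun e : E => Submodule.Quotient.mk (p := (J₁ • ⊤ : Submodule R E)) e)

theorem qPres_surjective (R : Type u) [CommRing R] (J₁ : Ideal R) (E : Type u) [AddCommGroup E]
    [Module R E] : Function.Surjective (qPres R J₁ E) :=
  Finsupp.linearCombination_surjective _ (Submodule.mkQ_surjective _)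

theorem cond_quotient (aR J₁ : Ideal R) (hJa : J₁ ≤ aR)
    (E : Type u) [AddCommGroup E] [Module R E]
    (hcond : LinearMap.ker (canonPres R E) ⊓ aR • ⊤ ≤ aR • LinearMap.ker (canonPres R E)) :
    LinearMap.ker (qPres R J₁ E) ⊓ (Ideal.map (Ideal.Quotient.mk J₁) aR) • ⊤ ≤
      (Ideal.map (Ideal.Quotient.mk J₁) aR) • LinearMap.ker (qPres R J₁ E) := by
  classical
  set mk₁ := Ideal.Quotient.mk J₁ with hmk₁
  set π : (E →₀ R) →ₗ[R] (E →₀ R ⧸ J₁) :=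
    Finsupp.mapRange.linearMap (Algebra.linearMap R (R ⧸ J₁)) with hπ
  have hπapply : ∀ (f : E →₀ R) (e : E), π f e = mk₁ (f e) := by
    intro f e
    simp [hπ, Finsupp.mapRange.linearMap_apply, Finsupp.mapRange_apply,
      Algebra.linearMap_apply, Ideal.Quotient.algebraMap_eq, hmk₁]
  have hπsurj : Function.Surjective π := by
    have h1 : Function.Surjective (⇑(Algebra.linearMap R (R ⧸ J₁))) := by
      intro x
      obtain ⟨r, rfl⟩ := Ideal.Quotient.mk_surjective (I := J₁) x
      exact ⟨r, rfl⟩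
    have h2 := Finsupp.mapRange_surjective (α := E) (⇑(Algebra.linearMap R (R ⧸ J₁)))
      (map_zero _) h1
    intro g
    obtain ⟨f, hf⟩ := h2 g
    exact ⟨f, by simpa [hπ, Finsupp.mapRange.linearMap_apply] using hf⟩
  have hπsmul : ∀ (r : R) (f : E →₀ R), π (r • f) = mk₁ r • π f := by
    intro r f
    ext e
    rw [hπapply, Finsupp.smul_apply, Finsupp.smul_apply, hπapply, smul_eq_mul, smul_eq_mul,
      map_mul]
  have hcomm : ∀ f : E →₀ R,
      qPres R J₁ E (π f) =
        Submodule.Quotient.mk (p := (J₁ • ⊤ : Submodule R E)) (canonPres R E f) := by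
    intro f
    induction f using Finsupp.induction_linear with
    | zero => simp
    | add f g hf hg => simp [map_add, hf, hg]
    | single e r =>
      have h1 : π (Finsupp.single e r) = Finsupp.single e (mk₁ r) := by
        ext e'
        rw [hπapply]
        by_cases h : e = e' <;> simp [Finsupp.single_apply, h]
      rw [h1, qPres, canonPres, Finsupp.linearCombination_single, Finsupp.linearCombination_single]
      rfl
  have hcoord : ∀ y ∈ (J₁ • ⊤ : Submodule R (E →₀ R)), ∀ e, y e ∈ J₁ := by
    intro y hy
    refine Submodule.smul_induction_on hy ?_ ?_
    · intro r hr f _ e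
      rw [Finsupp.smul_apply, smul_eq_mul]
      exact Ideal.mul_mem_right _ _ hr
    · intro f g hf hg e
      rw [Finsupp.add_apply]
      exact add_mem (hf e) (hg e)
  have hπJ : ∀ y ∈ (J₁ • ⊤ : Submodule R (E →₀ R)), π y = 0 := by
    intro y hy
    ext e
    rw [hπapply]
    simpa [hmk₁, Ideal.Quotient.eq_zero_iff_mem] using hcoord y hy e
  have hlift : ∀ x ∈ (Ideal.map mk₁ aR) • (⊤ : Submodule (R ⧸ J₁) (E →₀ R ⧸ J₁)),
      ∃ y ∈ aR • (⊤ : Submodule R (E →₀ R)), π y = x := by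
    intro x hx
    refine Submodule.smul_induction_on hx ?_ ?_
    · intro s hs g _
      obtain ⟨r₀, hr₀, rfl⟩ := (Ideal.mem_map_iff_of_surjective mk₁
        Ideal.Quotient.mk_surjective).mp hs
      obtain ⟨f, rfl⟩ := hπsurj g
      exact ⟨r₀ • f, Submodule.smul_mem_smul hr₀ trivial, hπsmul r₀ f⟩
    · rintro x₁ x₂ ⟨y₁, hy₁, rfl⟩ ⟨y₂, hy₂, rfl⟩
      exact ⟨y₁ + y₂, add_mem hy₁ hy₂, map_add π y₁ y₂⟩
  have hmap5 : ∀ z ∈ aR • LinearMap.ker (canonPres R E),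
      π z ∈ (Ideal.map mk₁ aR) • LinearMap.ker (qPres R J₁ E) := by
    intro z hz
    refine Submodule.smul_induction_on hz ?_ ?_
    · intro r hr f hf
      rw [hπsmul]
      refine Submodule.smul_mem_smul (Ideal.mem_map_of_mem _ hr) ?_
      rw [LinearMap.mem_ker, hcomm f, LinearMap.mem_ker.mp hf]
      simp
    · intro z₁ z₂ h₁ h₂
      rw [map_add]
      exact add_mem h₁ h₂
  have hsurJ : ∀ v ∈ (J₁ • ⊤ : Submodule R E), ∃ y₂ ∈ (J₁ • ⊤ : Submodule R (E →₀ R)),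
      canonPres R E y₂ = v := by
    intro v hv
    have hmem : v ∈ Submodule.map (canonPres R E) (J₁ • ⊤ : Submodule R (E →₀ R)) := by
      rw [Submodule.map_smul'', Submodule.map_top, LinearMap.range_eq_top.mpr
        (canonPres_surjective R E)]
      exact hv
    obtain ⟨y₂, hy₂, h⟩ := hmem
    exact ⟨y₂, hy₂, h⟩
  intro x hx
  obtain ⟨hxq, hxa⟩ := Submodule.mem_inf.mp hx
  obtain ⟨y, hy, rfl⟩ := hlift x hxa
  have h1 : canonPres R E y ∈ (J₁ • ⊤ : Submodule R E) :=
    (Submodule.Quotient.mk_eq_zero _).mp (by rw [← hcomm y]; exact LinearMap.mem_ker.mp hxq)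
  obtain ⟨y₂, hy₂, hpy₂⟩ := hsurJ _ h1
  have h2 : y - y₂ ∈ LinearMap.ker (canonPres R E) := by
    rw [LinearMap.mem_ker, map_sub, hpy₂, sub_self]
  have h3 : y - y₂ ∈ aR • (⊤ : Submodule R (E →₀ R)) :=
    sub_mem hy (Submodule.smul_mono hJa le_top hy₂)
  have h4 := hcond (Submodule.mem_inf.mpr ⟨h2, h3⟩)
  have h5 : π y = π (y - y₂) := by rw [map_sub, hπJ y₂ hy₂, sub_zero]
  rw [h5]
  exact hmap5 _ h4

end Chase

/-- The monomial ideal `(J)` of `ℤ[P]` generated by the `t^j`, `j ∈ J`. -/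
noncomputable def monomialIdeal (P : Type*) [AddCancelCommMonoid P] (J : Set P) :
    Ideal (AddMonoidAlgebra ℤ P) :=
  Ideal.span ((fun p : P => (AddMonoidAlgebra.single p 1 : AddMonoidAlgebra ℤ P)) '' J)

set_option synthInstance.maxHeartbeats 1000000 in
set_option maxHeartbeats 1000000 in
/-- Let `K ⊆ J` be proper ideals of a finitely generated torsion-free commutative
cancellative monoid `P`, `P⁺ = P \ P^*` its maximal ideal, and `E` a `ℤ[P]/(K)`-module.
If `Tor₁^{ℤ[P]/(K)}(ℤ[P]/(P⁺), E) = 0` (`E` is weakly t-flat relative to `K`), then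
`Tor₁^{ℤ[P]/(J)}(ℤ[P]/(P⁺), E/(J)E) = 0` (`E/(J)E` is weakly t-flat relative to `J`),
where `ℤ[P]/(J)` is realized as the quotient of `ℤ[P]/(K)` by the image of `(J)`. -/
theorem weakly_tflat_ascends {P : Type u} [AddCancelCommMonoid P]
    (hfg : AddMonoid.FG P)
    (htf : ∀ (n : ℕ) (a b : P), 0 < n → n • a = n • b → a = b)
    (K J : Set P) (hKJ : K ⊆ J)
    (hK : ∀ p : P, ∀ k ∈ K, p + k ∈ K) (hKproper : K ≠ Set.univ)
    (hJ : ∀ p : P, ∀ j ∈ J, p + j ∈ J) (hJproper : J ≠ Set.univ)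
    (E : Type u) [AddCommGroup E]
    [Module (AddMonoidAlgebra ℤ P ⧸ monomialIdeal P K) E]
    (hwtf : Subsingleton (((Tor (ModuleCat (AddMonoidAlgebra ℤ P ⧸ monomialIdeal P K)) 1).obj
      (ModuleCat.of _ ((AddMonoidAlgebra ℤ P ⧸ monomialIdeal P K) ⧸
        Ideal.map (Ideal.Quotient.mk (monomialIdeal P K))
          (monomialIdeal P {p : P | ¬ IsAddUnit p})))).obj
      (ModuleCat.of _ E))) :
    Subsingleton (((Tor (@ModuleCat ((AddMonoidAlgebra ℤ P ⧸ monomialIdeal P K) ⧸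
        Ideal.map (Ideal.Quotient.mk (monomialIdeal P K)) (monomialIdeal P J)) CommRing.toRing) 1).obj
      (ModuleCat.of _ (((AddMonoidAlgebra ℤ P ⧸ monomialIdeal P K) ⧸
          Ideal.map (Ideal.Quotient.mk (monomialIdeal P K)) (monomialIdeal P J)) ⧸
        Ideal.map (Ideal.Quotient.mk (Ideal.map (Ideal.Quotient.mk (monomialIdeal P K))
            (monomialIdeal P J)))
          (Ideal.map (Ideal.Quotient.mk (monomialIdeal P K))
            (monomialIdeal P {p : P | ¬ IsAddUnit p}))))).obj
      (ModuleCat.of _ (E ⧸ ((Ideal.map (Ideal.Quotient.mk (monomialIdeal P K))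
          (monomialIdeal P J)) •
        (⊤ : Submodule (AddMonoidAlgebra ℤ P ⧸ monomialIdeal P K) E))))) := by
  classical
  set R : Type u := AddMonoidAlgebra ℤ P ⧸ monomialIdeal P K with hRdef
  set aR : Ideal R := Ideal.map (Ideal.Quotient.mk (monomialIdeal P K))
    (monomialIdeal P {p : P | ¬ IsAddUnit p}) with haR
  set J₁ : Ideal R := Ideal.map (Ideal.Quotient.mk (monomialIdeal P K))
    (monomialIdeal P J) with hJ₁def
  have hJsub : J ⊆ {p : P | ¬ IsAddUnit p} := by
    intro j hj hu
    obtain ⟨b, hb⟩ := hu.exists_neg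
    apply hJproper
    rw [Set.eq_univ_iff_forall]
    intro p
    have hp : p + b + j = p := by rw [add_assoc, add_comm b j, hb, add_zero]
    have := hJ (p + b) j hj
    rwa [hp] at this
  have hJa : J₁ ≤ aR := Ideal.map_mono (Ideal.span_mono (Set.image_mono hJsub))
  have hcondR := (tor_one_subsingleton_iff aR E).mp hwtf
  have hcondq := cond_quotient aR J₁ hJa E hcondR
  refine (tor_one_subsingleton_iff (Ideal.map (Ideal.Quotient.mk J₁) aR)
    (E ⧸ (J₁ • (⊤ : Submodule R E)))).mpr ?_
  obtain ⟨h, hh⟩ := Module.projective_lifting_property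
    (canonPres (R ⧸ J₁) (E ⧸ (J₁ • (⊤ : Submodule R E)))) (qPres R J₁ E)
    (canonPres_surjective _ _)
  obtain ⟨k, hk⟩ := Module.projective_lifting_property (qPres R J₁ E)
    (canonPres (R ⧸ J₁) (E ⧸ (J₁ • (⊤ : Submodule R E)))) (qPres_surjective R J₁ E)
  refine cond_transfer (A := R ⧸ J₁) (Ideal.map (Ideal.Quotient.mk J₁) aR)
    (qPres R J₁ E) (canonPres (R ⧸ J₁) (E ⧸ (J₁ • (⊤ : Submodule R E)))) h hh k hk ?_
  convert hcondq using 2
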